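/- Let Q ∈ M_{M×N}(ℂ) have all entries of modulus 1, let H = F_M ⊗_Q F_N be the deformed Fourier matrix, and for x ∈ ℤ/Mℤ let R^x_{ab,cd} = (1/M)·Σ_{m∈ℤ/Mℤ} w^{mx}·Q_{ma}Q_{md}·conj(Q_{mc}Q_{mb}), w = e^{2πi/M}. Then for every r ≥ 1 the truncation matrix of H satisfies X_{(i₁,a₁)…(i_r,a_r), (j₁,b₁)…(j_r,b_r)} = δ_{a₁−b₁, a₂−b₂, …, a_r−b_r} · R^{i₁+j₂−j₁−i₂}_{a₁b₁, a₂b₂} ⋯ R^{i_r+j₁−j_r−i₁}_{a_rb_r, a₁b₁}, where δ_{a₁−b₁,…,a_r−b_r} equals 1 if a₁−b₁ = a₂−b₂ = ⋯ = a_r−b_r in ℤ/Nℤ and 0 otherwise, and the exponents of R are computed in ℤ/Mℤ with cyclic index conventions. -/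

import Mathlib

open Matrix BigOperators ComplexConjugate

/-- The profile matrix of `H`: `Q^H_{ab,cd} = (1/n)·∑_i H_{ia}·H_{id}·conj(H_{ib}·H_{ic})`. -/
noncomputable def profile {I : Type*} [Fintype I] (H : Matrix I I ℂ) (a b c d : I) : ℂ :=
  (Fintype.card I : ℂ)⁻¹ * ∑ i, H i a * H i d * conj (H i b * H i c)

/-- The truncation matrix of order `r`:
`X_{a₁…a_r,b₁…b_r} = Q_{a₁b₁,a₂b₂}⋯Q_{a_rb_r,a₁b₁}` (cyclic indices, via `finRotate`). -/
noncomputable def trunc {I : Type*} [Fintype I] (H : Matrix I I ℂ) (r : ℕ) :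
    Matrix (Fin r → I) (Fin r → I) ℂ :=
  fun a b => ∏ s : Fin r,
    profile H (a s) (b s) (a (finRotate r s)) (b (finRotate r s))

/-- The deformed Fourier matrix (Diţă deformation) `F_M ⊗_Q F_N`, with entries
`H_{(i,a),(j,b)} = Q_{ib}·w^{ij}·z^{ab}`, `w = e^{2πi/M}`, `z = e^{2πi/N}`. -/
noncomputable def defFourier (M N : ℕ) (Q : Matrix (ZMod M) (ZMod N) ℂ) :
    Matrix (ZMod M × ZMod N) (ZMod M × ZMod N) ℂ :=
  fun p q => Q p.1 q.2 *
    Complex.exp (2 * Real.pi * Complex.I * ((p.1.val : ℂ) * (q.1.val : ℂ)) / M) *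
    Complex.exp (2 * Real.pi * Complex.I * ((p.2.val : ℂ) * (q.2.val : ℂ)) / N)

/-- For `x ∈ ℤ/Mℤ`, the matrix `R^x ∈ M_{N²}(ℂ)` with entries
`R^x_{ab,cd} = (1/M)·∑_m w^{mx}·Q_{ma}·Q_{md}·conj(Q_{mc}·Q_{mb})`, `w = e^{2πi/M}`. -/
noncomputable def Rmat (M N : ℕ) [NeZero M] (Q : Matrix (ZMod M) (ZMod N) ℂ)
    (x : ZMod M) (a b c d : ZMod N) : ℂ :=
  (M : ℂ)⁻¹ * ∑ m : ZMod M,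
    Complex.exp (2 * Real.pi * Complex.I * ((m.val : ℂ) * (x.val : ℂ)) / M) *
      Q m a * Q m d * conj (Q m c * Q m b)

noncomputable def E (n : ℕ) (z : ℂ) : ℂ := Complex.exp (2 * Real.pi * Complex.I * z / n)

lemma E_mul (n : ℕ) (z w : ℂ) : E n z * E n w = E n (z + w) := by
  rw [E, E, E, ← Complex.exp_add]; congr 1; ring

lemma E_conj (n : ℕ) (x y : ℕ) :
    conj (E n ((x : ℂ) * (y : ℂ))) = E n (-((x : ℂ) * y)) := by
  rw [E, E, ← Complex.exp_conj]; congr 1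
  simp only [map_div₀, _root_.map_mul, Complex.conj_I, Complex.conj_ofReal, map_natCast, map_ofNat]
  ring

lemma E_int_one (n : ℕ) (k : ℤ) (hn : n ≠ 0) : E n ((n : ℂ) * (k : ℂ)) = 1 := by
  rw [E]
  have hne : (n : ℂ) ≠ 0 := Nat.cast_ne_zero.mpr hn
  have : 2 * (Real.pi : ℂ) * Complex.I * ((n : ℂ) * k) / n = k * (2 * Real.pi * Complex.I) := by
    field_simp
  rw [this, Complex.exp_int_mul_two_pi_mul_I]

lemma E_congr (n : ℕ) (hn : n ≠ 0) (s t : ℤ) (h : (n : ℤ) ∣ s - t) :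
    E n (s : ℂ) = E n (t : ℂ) := by
  obtain ⟨k, hk⟩ := h
  have hs : (s : ℂ) = (t : ℂ) + (n : ℂ) * (k : ℂ) := by
    have : s = t + n * k := by omega
    rw [this]; push_cast; ring
  rw [hs, ← E_mul, E_int_one n k hn, mul_one]

lemma E_pow (n : ℕ) (k : ℕ) (t : ℤ) : E n ((k : ℂ) * (t : ℂ)) = (E n (t : ℂ)) ^ k := by
  rw [E, E, ← Complex.exp_nat_mul]; congr 1; ring

lemma sum_E (n : ℕ) [NeZero n] (t : ℤ) :
    ∑ m : ZMod n, E n ((m.val : ℂ) * (t : ℂ)) = if (n : ℤ) ∣ t then (n : ℂ) else 0 := by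
  have hn : n ≠ 0 := NeZero.ne n
  have h1 : ∑ m : ZMod n, E n ((m.val : ℂ) * (t : ℂ)) = ∑ k ∈ Finset.range n, (E n (t : ℂ)) ^ k := by
    rw [Finset.sum_nbij' (i := fun (m : ZMod n) => m.val) (j := fun k => (k : ZMod n))]
    · intro m _; exact Finset.mem_range.mpr (ZMod.val_lt m)
    · intro k _; exact Finset.mem_univ _
    · intro m _; exact ZMod.natCast_rightInverse m
    · intro k hk; exact ZMod.val_cast_of_lt (Finset.mem_range.mp hk)
    · intro m _; exact E_pow n m.val t
  rw [h1]
  by_cases h : (n : ℤ) ∣ t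
  · have : E n (t : ℂ) = 1 := by
      have := E_congr n hn t 0 (by simpa using h)
      simpa [E] using this
    simp [this, h]
  · have hu : E n (t : ℂ) ≠ 1 := by
      intro hu
      apply h
      rw [E, Complex.exp_eq_one_iff] at hu
      obtain ⟨k, hk⟩ := hu
      have hne : (n : ℂ) ≠ 0 := Nat.cast_ne_zero.mpr hn
      have hπ : (Real.pi : ℂ) ≠ 0 := Complex.ofReal_ne_zero.mpr Real.pi_ne_zero
      have h2 : (2 * (Real.pi : ℂ) * Complex.I) ≠ 0 := by
        simp [hπ, Complex.I_ne_zero]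
      have hc : (t : ℂ) = (n : ℂ) * (k : ℂ) := by
        refine mul_left_cancel₀ h2 ?_
        field_simp at hk
        linear_combination (2 * (Real.pi : ℂ) * Complex.I) * hk
      exact ⟨k, by exact_mod_cast hc⟩
    rw [geom_sum_eq hu n]
    have hEn : E n (t : ℂ) ^ n = 1 := by
      rw [← E_pow]
      exact E_int_one n t hn
    rw [hEn]; simp [h]

lemma profile_defFourier (M N : ℕ) [NeZero M] [NeZero N]
    (Q : Matrix (ZMod M) (ZMod N) ℂ) (i j k l : ZMod M) (a b c d : ZMod N) :
    profile (defFourier M N Q) (i, a) (j, b) (k, c) (l, d) =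
      (if a - b = c - d then 1 else 0) * Rmat M N Q (i + l - j - k) a b c d := by
  have hM : (M : ℂ) ≠ 0 := Nat.cast_ne_zero.mpr (NeZero.ne M)
  have hN : (N : ℂ) ≠ 0 := Nat.cast_ne_zero.mpr (NeZero.ne N)
  set tM : ℤ := (i.val : ℤ) + l.val - j.val - k.val with htM
  set tN : ℤ := (a.val : ℤ) + d.val - b.val - c.val with htN
  set x : ZMod M := i + l - j - k with hx
  set F : ZMod M → ℂ := fun m =>
    Q m a * Q m d * conj (Q m b) * conj (Q m c) * E M ((m.val : ℂ) * (tM : ℂ)) with hF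
  set G : ZMod N → ℂ := fun n => E N ((n.val : ℂ) * (tN : ℂ)) with hG
  have key : ∀ (m : ZMod M) (n : ZMod N),
      defFourier M N Q (m, n) (i, a) * defFourier M N Q (m, n) (l, d) *
        conj (defFourier M N Q (m, n) (j, b) * defFourier M N Q (m, n) (k, c)) = F m * G n := by
    intro m n
    show (Q m a * E M ((m.val : ℂ) * (i.val : ℂ)) * E N ((n.val : ℂ) * (a.val : ℂ))) *
        (Q m d * E M ((m.val : ℂ) * (l.val : ℂ)) * E N ((n.val : ℂ) * (d.val : ℂ))) *
        conj ((Q m b * E M ((m.val : ℂ) * (j.val : ℂ)) * E N ((n.val : ℂ) * (b.val : ℂ))) *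
          (Q m c * E M ((m.val : ℂ) * (k.val : ℂ)) * E N ((n.val : ℂ) * (c.val : ℂ)))) = F m * G n
    have hEM : E M ((m.val : ℂ) * (tM : ℂ)) =
        E M ((m.val : ℂ) * (i.val : ℂ)) * E M ((m.val : ℂ) * (l.val : ℂ)) *
          E M (-((m.val : ℂ) * (j.val : ℂ))) * E M (-((m.val : ℂ) * (k.val : ℂ))) := by
      rw [E_mul, E_mul, E_mul]; congr 1; rw [htM]; push_cast; ring
    have hEN : E N ((n.val : ℂ) * (tN : ℂ)) =
        E N ((n.val : ℂ) * (a.val : ℂ)) * E N ((n.val : ℂ) * (d.val : ℂ)) *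
          E N (-((n.val : ℂ) * (b.val : ℂ))) * E N (-((n.val : ℂ) * (c.val : ℂ))) := by
      rw [E_mul, E_mul, E_mul]; congr 1; rw [htN]; push_cast; ring
    rw [hF, hG]; simp only [_root_.map_mul, E_conj, hEM, hEN]; ring
  have hsplit : ∑ p : ZMod M × ZMod N,
      defFourier M N Q p (i, a) * defFourier M N Q p (l, d) *
        conj (defFourier M N Q p (j, b) * defFourier M N Q p (k, c)) =
      (∑ m : ZMod M, F m) * (∑ n : ZMod N, G n) := by
    rw [Fintype.sum_prod_type, Finset.sum_mul_sum]
    exact Finset.sum_congr rfl fun m _ => Finset.sum_congr rfl fun n _ => key m n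
  have hiff : ((N : ℤ) ∣ tN) ↔ a - b = c - d := by
    rw [← ZMod.intCast_zmod_eq_zero_iff_dvd, htN]
    push_cast [ZMod.natCast_val, ZMod.cast_id]
    constructor <;> intro h <;> linear_combination h
  have hGsum : ∑ n : ZMod N, G n = if a - b = c - d then (N : ℂ) else 0 := by
    rw [hG, sum_E, if_congr hiff rfl rfl]
  have hFsum : ∑ m : ZMod M, F m = ∑ m : ZMod M,
      Complex.exp (2 * Real.pi * Complex.I * ((m.val : ℂ) * (x.val : ℂ)) / M) *
        Q m a * Q m d * conj (Q m c * Q m b) := by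
    refine Finset.sum_congr rfl fun m _ => ?_
    have hdvd : (M : ℤ) ∣ ((m.val : ℤ) * tM - (m.val : ℤ) * (x.val : ℤ)) := by
      rw [← mul_sub]
      refine Dvd.dvd.mul_left ?_ _
      rw [← ZMod.intCast_zmod_eq_zero_iff_dvd]
      push_cast [ZMod.natCast_val, ZMod.cast_id, htM, hx]
      ring
    have hE := E_congr M (NeZero.ne M) ((m.val : ℤ) * tM) ((m.val : ℤ) * (x.val : ℤ)) hdvd
    have h1 : E M ((m.val : ℂ) * (tM : ℂ)) = E M ((m.val : ℂ) * (x.val : ℂ)) := by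
      calc E M ((m.val : ℂ) * (tM : ℂ)) = E M ((((m.val : ℤ) * tM : ℤ) : ℂ)) := by
            congr 1; push_cast; ring
        _ = E M ((((m.val : ℤ) * (x.val : ℤ) : ℤ) : ℂ)) := hE
        _ = E M ((m.val : ℂ) * (x.val : ℂ)) := by congr 1; push_cast; ring
    rw [hF]
    show Q m a * Q m d * conj (Q m b) * conj (Q m c) * E M ((m.val : ℂ) * (tM : ℂ)) = _
    rw [h1]
    show _ = E M ((m.val : ℂ) * (x.val : ℂ)) * Q m a * Q m d * conj (Q m c * Q m b)
    simp only [_root_.map_mul]; ring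
  rw [profile, hsplit, hGsum, hFsum, Rmat]
  have hcard : (Fintype.card (ZMod M × ZMod N) : ℂ) = (M : ℂ) * N := by
    simp [Fintype.card_prod, ZMod.card]
  rw [hcard]
  by_cases hcond : a - b = c - d
  · rw [if_pos hcond, if_pos hcond, one_mul, mul_inv]
    field_simp
    refine Finset.sum_congr rfl fun m _ => ?_
    ring_nf
  · rw [if_neg hcond, if_neg hcond]
    simp

open Fin.NatCast in
lemma delta_cycle {n : ℕ} {α : Type*} (f : Fin (n+1) → α)
    (h : ∀ s, f s = f (s + 1)) : ∀ s t, f s = f t := by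
  have key : ∀ k : ℕ, f ((k : Fin (n+1))) = f 0 := by
    intro k
    induction k with
    | zero => simp
    | succ k ih => rw [Nat.cast_add_one, ← h, ih]
  intro s t
  rw [← Fin.cast_val_eq_self s, ← Fin.cast_val_eq_self t, key, key]

/-- the truncation matrix of the deformed Fourier matrix `H = F_M ⊗_Q F_N`
is given by `X_{(i₁,a₁)…(i_r,a_r),(j₁,b₁)…(j_r,b_r)} = δ_{a₁−b₁,…,a_r−b_r} ·
R^{i₁+j₂−j₁−i₂}_{a₁b₁,a₂b₂} ⋯ R^{i_r+j₁−j_r−i₁}_{a_rb_r,a₁b₁}` (cyclic indices). -/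
theorem trunc_defFourier (M N : ℕ) [NeZero M] [NeZero N]
    (Q : Matrix (ZMod M) (ZMod N) ℂ) (hQ : ∀ i a, ‖Q i a‖ = 1)
    (r : ℕ) (hr : 1 ≤ r)
    (i j : Fin r → ZMod M) (a b : Fin r → ZMod N) :
    trunc (defFourier M N Q) r (fun s => (i s, a s)) (fun s => (j s, b s)) =
      (if ∀ s t : Fin r, a s - b s = a t - b t then 1 else 0) *
        ∏ s : Fin r,
          Rmat M N Q (i s + j (finRotate r s) - j s - i (finRotate r s))
            (a s) (b s) (a (finRotate r s)) (b (finRotate r s)) := by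
  obtain ⟨n, rfl⟩ : ∃ n, r = n + 1 := ⟨r - 1, by omega⟩
  simp only [trunc, finRotate_succ_apply]
  have h1 : (∏ s : Fin (n+1), profile (defFourier M N Q) (i s, a s) (j s, b s)
      (i (s+1), a (s+1)) (j (s+1), b (s+1))) =
      ∏ s : Fin (n+1), ((if a s - b s = a (s+1) - b (s+1) then (1:ℂ) else 0) *
        Rmat M N Q (i s + j (s+1) - j s - i (s+1)) (a s) (b s) (a (s+1)) (b (s+1))) :=
    Finset.prod_congr rfl fun s _ =>
      profile_defFourier M N Q (i s) (j s) (i (s+1)) (j (s+1)) (a s) (b s) (a (s+1)) (b (s+1))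
  rw [h1, Finset.prod_mul_distrib]
  congr 1
  rw [Fintype.prod_boole]
  by_cases h : ∀ s t : Fin (n+1), a s - b s = a t - b t
  · rw [if_pos (fun s => h s (s+1)), if_pos h]
  · rw [if_neg, if_neg h]
    intro hc
    exact h (delta_cycle (fun s => a s - b s) hc)
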